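/- Let z ∈ ℝ, let g be a real polynomial with g(z) ≠ 0, let k < p be natural numbers, let α : ℕ → ℝ satisfy α_{k+1} ≠ 0, and let f(ξ) = Σ_{m=k+1}^{p} α_m ξ^m. Then, as δ → 0⁺, the integral ∫_z^{z+δ}∫_0^δ g(ξ₁) f(ξ₂) dξ₂ dξ₁ is Θ(δ^{k+3}). -/

import Mathlib

open Topology Asymptotics Polynomial

private lemma isTheta_of_div_tendsto' {l : Filter ℝ} {f g : ℝ → ℝ} {c : ℝ}
    (hc : c ≠ 0) (hg : ∀ᶠ x in l, g x ≠ 0)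
    (h : Filter.Tendsto (fun x => f x / g x) l (𝓝 c)) : f =Θ[l] g := by
  have hne : ∀ᶠ x in l, f x / g x ≠ 0 := h.eventually_ne hc
  have hf : ∀ᶠ x in l, f x ≠ 0 := by
    filter_upwards [hne] with x hx h0
    exact hx (by simp [h0])
  constructor
  · exact Asymptotics.isBigO_of_div_tendsto_nhds
      (hg.mono fun x hx h0 => absurd h0 hx) c h
  · refine Asymptotics.isBigO_of_div_tendsto_nhds
      (hf.mono fun x hx h0 => absurd h0 hx) c⁻¹ ?_
    have := h.inv₀ hc
    simpa [Pi.div_def, inv_div] using this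


/-- Configuration (b): for `φ(ξ₁,ξ₂) = g(ξ₁) f(ξ₂)` with `g(z) ≠ 0` and
`f(ξ) = ∑_{m=k+1}^{p} α_m ξ^m`, `α_{k+1} ≠ 0`, the L¹-type integral
`∫_z^{z+δ} ∫_0^δ g(ξ₁) f(ξ₂)` is `Θ(δ^{k+3})` as `δ → 0⁺`. -/
theorem lumped_mass_entry_asymptotics_config_b (z : ℝ)
    (g : Polynomial ℝ) (hg : g.eval z ≠ 0)
    (k p : ℕ) (hkp : k < p) (α : ℕ → ℝ) (hα : α (k + 1) ≠ 0) :
    (fun δ : ℝ => ∫ ξ₁ in z..(z + δ), ∫ ξ₂ in (0:ℝ)..δ,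
        g.eval ξ₁ * ∑ m ∈ Finset.Icc (k + 1) p, α m * ξ₂ ^ m)
      =Θ[𝓝[>] (0:ℝ)] (fun δ : ℝ => δ ^ (k + 3)) := by
  set A : ℝ → ℝ := fun δ => ∫ ξ₁ in z..(z + δ), g.eval ξ₁ with hA
  set C : ℝ → ℝ := fun δ =>
    ∑ m ∈ Finset.Icc (k + 1) p, α m * δ ^ (m - (k + 1)) / (m + 1) with hC
  -- closed form of the double integral
  have hF : ∀ δ : ℝ, (∫ ξ₁ in z..(z + δ), ∫ ξ₂ in (0:ℝ)..δ,
      g.eval ξ₁ * ∑ m ∈ Finset.Icc (k + 1) p, α m * ξ₂ ^ m)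
      = A δ * (δ ^ (k + 2) * C δ) := by
    intro δ
    have h1 : ∀ ξ₁ : ℝ, (∫ ξ₂ in (0:ℝ)..δ,
        g.eval ξ₁ * ∑ m ∈ Finset.Icc (k + 1) p, α m * ξ₂ ^ m)
        = g.eval ξ₁ * ∑ m ∈ Finset.Icc (k + 1) p, α m * (δ ^ (m + 1) / (m + 1)) := by
      intro ξ₁
      rw [intervalIntegral.integral_const_mul,
        intervalIntegral.integral_finset_sum (fun m _ => by
          exact ((continuous_const.mul (continuous_pow m)).intervalIntegrable _ _))]
      congr 1
      refine Finset.sum_congr rfl fun m _ => ?_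
      rw [intervalIntegral.integral_const_mul, integral_pow]
      simp
    simp_rw [h1]
    rw [intervalIntegral.integral_mul_const]
    have h2 : ∑ m ∈ Finset.Icc (k + 1) p, α m * (δ ^ (m + 1) / (m + 1))
        = δ ^ (k + 2) * C δ := by
      rw [hC, Finset.mul_sum]
      refine Finset.sum_congr rfl fun m hm => ?_
      have hm' : k + 1 ≤ m := (Finset.mem_Icc.mp hm).1
      have hpow : δ ^ (m + 1) = δ ^ (k + 2) * δ ^ (m - (k + 1)) := by
        rw [← pow_add]
        congr 1
        omega
      rw [hpow]
      ring
    rw [h2]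
  -- A =Θ δ
  have hAθ : A =Θ[𝓝[>] (0:ℝ)] (fun δ : ℝ => δ) := by
    refine isTheta_of_div_tendsto' hg ?_ ?_
    · filter_upwards [self_mem_nhdsWithin] with x hx
      exact ne_of_gt hx
    · have hcont : Continuous fun x : ℝ => g.eval x := g.continuous_aeval
      have hd : HasDerivAt (fun u : ℝ => ∫ x in z..u, g.eval x) (g.eval z) z :=
        (intervalIntegral.integral_hasStrictDerivAt_right
          (hcont.intervalIntegrable _ _)
          (hcont.stronglyMeasurableAtFilter _ _) hcont.continuousAt).hasDerivAt
      have hd' : HasDerivAt (fun u : ℝ => ∫ x in z..u, g.eval x) (g.eval z)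
          (z + (0 : ℝ)) := by simpa using hd
      have hd2 : HasDerivAt A (g.eval z) 0 := by
        have := hd'.comp (0 : ℝ) ((hasDerivAt_id (0 : ℝ)).const_add z)
        simpa [hA, Function.comp_def] using this
      have := hasDerivAt_iff_tendsto_slope.mp hd2
      have hA0 : A 0 = 0 := by simp [hA]
      have hsub : 𝓝[>] (0:ℝ) ≤ 𝓝[≠] (0:ℝ) :=
        nhdsWithin_mono _ fun x hx => ne_of_gt hx
      refine (this.mono_left hsub).congr' ?_
      filter_upwards [self_mem_nhdsWithin] with x hx
      simp [slope, hA0, inv_mul_eq_div]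
  -- C =Θ 1
  have hC0 : C 0 = α (k + 1) / (k + 2) := by
    rw [show C 0 = ∑ m ∈ Finset.Icc (k + 1) p,
        α m * (0:ℝ) ^ (m - (k + 1)) / (m + 1) from rfl,
      Finset.sum_eq_single (k + 1)]
    · push_cast
      norm_num
      ring_nf
    · intro m hm hne
      have hm' : k + 1 ≤ m := (Finset.mem_Icc.mp hm).1
      have : m - (k + 1) ≠ 0 := by omega
      simp [zero_pow this]
    · intro h
      exact absurd (Finset.mem_Icc.mpr ⟨le_refl _, by omega⟩) h
  have hCθ : C =Θ[𝓝[>] (0:ℝ)] (fun _ : ℝ => (1 : ℝ)) := by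
    refine isTheta_of_div_tendsto' (c := C 0) ?_ ?_ ?_
    · rw [hC0]
      exact div_ne_zero hα (by positivity)
    · exact Filter.Eventually.of_forall fun _ => one_ne_zero
    · simp only [div_one]
      have : Continuous C := by
        rw [hC]
        exact continuous_finset_sum _ fun m _ =>
          (continuous_const.mul (continuous_pow _)).div_const _
      exact (this.tendsto 0).mono_left nhdsWithin_le_nhds
  -- combine
  have := (hAθ.mul (((isTheta_rfl (f := fun δ : ℝ => δ ^ (k + 2))).mul hCθ)))
  have heq1 : (fun δ : ℝ => A δ * (δ ^ (k + 2) * C δ))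
      =Θ[𝓝[>] (0:ℝ)] fun δ : ℝ => δ * (δ ^ (k + 2) * 1) := this
  have heq2 : (fun δ : ℝ => δ * (δ ^ (k + 2) * 1)) = fun δ : ℝ => δ ^ (k + 3) := by
    funext δ; ring
  have hfun : (fun δ : ℝ => ∫ ξ₁ in z..(z + δ), ∫ ξ₂ in (0:ℝ)..δ,
      g.eval ξ₁ * ∑ m ∈ Finset.Icc (k + 1) p, α m * ξ₂ ^ m)
      = fun δ : ℝ => A δ * (δ ^ (k + 2) * C δ) := funext hF
  rw [hfun, ← heq2]
  exact heq1
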